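/- Let r, s be coprime positive integers with r odd, and let H be an odd positive integer. Then the map (m̃, ñ) ↦ (m, n) defined by 2m − 1 = r(2m̃ − 1) and n = s·ñ gives a bijection between the set of solutions (m̃, ñ) ∈ ℕ≥1 × ℕ of (2ñ)² + (2m̃ − 1)² = H and the set of solutions (m, n) ∈ ℕ≥1 × ℕ of r²(2n)² + s²(2m − 1)² = r²s²H. -/
import Mathlib


/-- Scaling bijection for the kernel Diophantine equation: for coprime positive `r, s` with
`r` odd and odd `H`, the map `(m̃, ñ) ↦ (m, n)` with `2m − 1 = r(2m̃ − 1)`, `n = s·ñ`,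
is a bijection from the solutions of `(2ñ)² + (2m̃−1)² = H` onto the solutions of
`r²(2n)² + s²(2m−1)² = r²s²H` (pairs written `(m, n)` with `m ≥ 1`). -/
theorem stmt_6 (r s H : ℕ) (hr : 0 < r) (hs : 0 < s) (hcop : Nat.Coprime r s)
    (hrodd : Odd r) (hH : Odd H) :
    Set.BijOn (fun p : ℕ × ℕ => ((r * (2 * p.1 - 1) + 1) / 2, s * p.2))
      {p : ℕ × ℕ | 1 ≤ p.1 ∧ (2 * p.2) ^ 2 + (2 * p.1 - 1) ^ 2 = H}
      {p : ℕ × ℕ | 1 ≤ p.1 ∧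
        r ^ 2 * (2 * p.2) ^ 2 + s ^ 2 * (2 * p.1 - 1) ^ 2 = r ^ 2 * s ^ 2 * H} := by
  obtain ⟨rk, hrk⟩ := hrodd
  refine ⟨?_, ?_, ?_⟩
  · rintro ⟨m, n⟩ ⟨hm, heq⟩
    have hodd : ∃ k, r * (2 * m - 1) = 2 * k + 1 := ⟨rk * (2 * (m - 1)) + rk + (m - 1), by
      have h1 : 2 * m - 1 = 2 * (m - 1) + 1 := by omega
      rw [h1, hrk]; ring⟩
    obtain ⟨k, hk⟩ := hodd
    constructor
    · simp only; omega
    · simp only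
      have h1 : 2 * ((r * (2 * m - 1) + 1) / 2) - 1 = r * (2 * m - 1) := by omega
      rw [h1, ← heq]; ring
  · rintro ⟨m1, n1⟩ ⟨hm1, -⟩ ⟨m2, n2⟩ ⟨hm2, -⟩ hfe
    simp only [Prod.mk.injEq] at hfe
    obtain ⟨he1, he2⟩ := hfe
    have hn : n1 = n2 := by
      have := Nat.eq_of_mul_eq_mul_left hs he2
      exact this
    have hodd1 : ∃ k, r * (2 * m1 - 1) = 2 * k + 1 := ⟨rk * (2 * (m1 - 1)) + rk + (m1 - 1), by
      have h1 : 2 * m1 - 1 = 2 * (m1 - 1) + 1 := by omega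
      rw [h1, hrk]; ring⟩
    have hodd2 : ∃ k, r * (2 * m2 - 1) = 2 * k + 1 := ⟨rk * (2 * (m2 - 1)) + rk + (m2 - 1), by
      have h1 : 2 * m2 - 1 = 2 * (m2 - 1) + 1 := by omega
      rw [h1, hrk]; ring⟩
    obtain ⟨k1, hk1⟩ := hodd1
    obtain ⟨k2, hk2⟩ := hodd2
    have hra : r * (2 * m1 - 1) = r * (2 * m2 - 1) := by omega
    have := Nat.eq_of_mul_eq_mul_left hr hra
    have hm : m1 = m2 := by omega
    exact Prod.ext hm hn
  · rintro ⟨m, n⟩ ⟨hm, heq⟩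
    have hcop2 : Nat.Coprime (s ^ 2) (r ^ 2) := hcop.symm.pow 2 2
    have hcop2' : Nat.Coprime (r ^ 2) (s ^ 2) := hcop.pow 2 2
    have hs2 : s ^ 2 ∣ r ^ 2 * (2 * n) ^ 2 := by
      have h1 : s ^ 2 ∣ r ^ 2 * s ^ 2 * H := ⟨r ^ 2 * H, by ring⟩
      have h2 : s ^ 2 ∣ s ^ 2 * (2 * m - 1) ^ 2 := ⟨(2 * m - 1) ^ 2, rfl⟩
      exact (Nat.dvd_add_iff_left h2).mpr (heq ▸ h1)
    have hsd : s ∣ 2 * n := by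
      have h3 : s ^ 2 ∣ (2 * n) ^ 2 * r ^ 2 := by rwa [mul_comm] at hs2
      have := Nat.Coprime.dvd_of_dvd_mul_right hcop2 h3
      exact (Nat.pow_dvd_pow_iff two_ne_zero).mp this
    have hr2 : r ^ 2 ∣ s ^ 2 * (2 * m - 1) ^ 2 := by
      have h1 : r ^ 2 ∣ r ^ 2 * s ^ 2 * H := ⟨s ^ 2 * H, by ring⟩
      have h2 : r ^ 2 ∣ r ^ 2 * (2 * n) ^ 2 := ⟨(2 * n) ^ 2, rfl⟩
      have h4 : r ^ 2 ∣ r ^ 2 * (2 * n) ^ 2 + s ^ 2 * (2 * m - 1) ^ 2 := heq ▸ h1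
      exact (Nat.dvd_add_right h2).mp h4
    have hrd : r ∣ 2 * m - 1 := by
      have h3 : r ^ 2 ∣ (2 * m - 1) ^ 2 * s ^ 2 := by rwa [mul_comm] at hr2
      have := Nat.Coprime.dvd_of_dvd_mul_right hcop2' h3
      exact (Nat.pow_dvd_pow_iff two_ne_zero).mp this
    obtain ⟨t, ht⟩ := hsd
    obtain ⟨a, ha⟩ := hrd
    have heq2 : t ^ 2 + a ^ 2 = H := by
      have h1 : (r * s) ^ 2 * (t ^ 2 + a ^ 2) = (r * s) ^ 2 * H := by
        rw [ht, ha] at heq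
        calc (r * s) ^ 2 * (t ^ 2 + a ^ 2)
            = r ^ 2 * (s * t) ^ 2 + s ^ 2 * (r * a) ^ 2 := by ring
          _ = r ^ 2 * s ^ 2 * H := heq
          _ = (r * s) ^ 2 * H := by ring
      exact Nat.eq_of_mul_eq_mul_left (by positivity) h1
    have hra_odd : Odd (r * a) := by
      rw [← ha]; exact Nat.odd_iff.mpr (by omega)
    have haodd : a % 2 = 1 := Nat.odd_iff.mp (Nat.odd_mul.mp hra_odd).2
    have ha2 : a ^ 2 % 2 = 1 := Nat.odd_iff.mp ((Nat.odd_iff.mpr haodd).pow)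
    have hH2 : H % 2 = 1 := Nat.odd_iff.mp hH
    have ht2 : t ^ 2 % 2 = 0 := by omega
    have hteven : t % 2 = 0 := by
      have : Even t := (Nat.even_pow (n := 2)).mp (Nat.even_iff.mpr ht2) |>.1
      exact Nat.even_iff.mp this
    have h2 : 2 * ((a + 1) / 2) - 1 = a := by omega
    have h1 : 2 * (t / 2) = t := by omega
    refine ⟨((a + 1) / 2, t / 2), ⟨by omega, ?_⟩, ?_⟩
    · simp only
      rw [h1, h2]; exact heq2
    · simp only [Prod.mk.injEq]
      rw [h2]
      have hst : s * t = 2 * (s * (t / 2)) := by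
        calc s * t = s * (2 * (t / 2)) := by rw [h1]
          _ = 2 * (s * (t / 2)) := by ring
      constructor
      · omega
      · omega
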